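/- Let l and k be positive integers with l ≤ k and l ≡ k (mod 2), and let n be an integer with n ≥ 2k. Then in the symmetric group of permutations of Fin n, the permutation ι_l can be written as a product of three permutations, each of which is conjugate to ι_k. -/

import Mathlib

/-- `iotaFin n k` is the permutation `(1,2)(3,4)⋯(2k−1,2k)` of `Fin n`, i.e. the product
of the `k` disjoint transpositions swapping `2i` and `2i+1` for `i = 0, …, k−1`. -/
def iotaFin (n k : ℕ) : Equiv.Perm (Fin n) :=
  ((List.range k).map fun i =>
    if h : 2 * i + 1 < n then
      Equiv.swap (⟨2 * i, by omega⟩ : Fin n) ⟨2 * i + 1, h⟩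
    else 1).prod


/-- swap of `a` and `b` in `Fin n`, as naturals, or `1` if out of bounds. -/
def tsw (n a b : ℕ) : Equiv.Perm (Fin n) :=
  if h : a < n ∧ b < n then Equiv.swap ⟨a, h.1⟩ ⟨b, h.2⟩ else 1

/-- entries mentioned by a list of pairs -/
def ent (L : List (ℕ × ℕ)) : List ℕ := L.flatMap fun p => [p.1, p.2]

/-- product of swaps -/
def PS (n : ℕ) (L : List (ℕ × ℕ)) : Equiv.Perm (Fin n) :=
  (L.map fun p => tsw n p.1 p.2).prod

@[simp] lemma ent_nil : ent [] = [] := rfl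
@[simp] lemma ent_cons (p : ℕ × ℕ) (L : List (ℕ × ℕ)) :
    ent (p :: L) = p.1 :: p.2 :: ent L := rfl
@[simp] lemma ent_append (L1 L2 : List (ℕ × ℕ)) :
    ent (L1 ++ L2) = ent L1 ++ ent L2 := List.flatMap_append ..

@[simp] lemma PS_nil (n : ℕ) : PS n [] = 1 := rfl
@[simp] lemma PS_cons (n : ℕ) (p : ℕ × ℕ) (L : List (ℕ × ℕ)) :
    PS n (p :: L) = tsw n p.1 p.2 * PS n L := by
  simp [PS]
@[simp] lemma PS_append (n : ℕ) (L1 L2 : List (ℕ × ℕ)) :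
    PS n (L1 ++ L2) = PS n L1 * PS n L2 := by
  simp [PS]

lemma tsw_fix {n a b : ℕ} (x : Fin n) (h1 : x.val ≠ a) (h2 : x.val ≠ b) :
    tsw n a b x = x := by
  unfold tsw
  split
  · exact Equiv.swap_apply_of_ne_of_ne (fun h => h1 (by simpa using congrArg Fin.val h))
      (fun h => h2 (by simpa using congrArg Fin.val h))
  · rfl

lemma tsw_sq (n a b : ℕ) : tsw n a b * tsw n a b = 1 := by
  unfold tsw; split <;> simp

lemma PS_fix {n : ℕ} {L : List (ℕ × ℕ)} (x : Fin n) (h : ∀ v ∈ ent L, x.val ≠ v) :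
    PS n L x = x := by
  induction L with
  | nil => rfl
  | cons p L ih =>
      simp only [PS_cons, Equiv.Perm.mul_apply]
      rw [ih (fun v hv => h v (by simp [hv]))]
      exact tsw_fix x (h p.1 (by simp)) (h p.2 (by simp))

lemma PS_disjoint {n : ℕ} {L1 L2 : List (ℕ × ℕ)}
    (h : ∀ v ∈ ent L1, v ∉ ent L2) :
    (PS n L1).Disjoint (PS n L2) := by
  intro x
  by_cases hx : x.val ∈ ent L1
  · exact Or.inr (PS_fix x (fun v hv hxv => h _ hx (hxv ▸ hv)))
  · exact Or.inl (PS_fix x (fun v hv hxv => hx (hxv ▸ hv)))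

lemma disjoint_tsw_PS {n a b : ℕ} {L : List (ℕ × ℕ)}
    (h1 : a ∉ ent L) (h2 : b ∉ ent L) :
    (tsw n a b).Disjoint (PS n L) := by
  intro x
  by_cases hx : x.val = a ∨ x.val = b
  · refine Or.inr (PS_fix x (fun v hv hxv => ?_))
    rcases hx with hx | hx
    · exact h1 (hx ▸ hxv ▸ hv)
    · exact h2 (hx ▸ hxv ▸ hv)
  · push_neg at hx
    exact Or.inl (tsw_fix x hx.1 hx.2)

lemma PS_sq {n : ℕ} {L : List (ℕ × ℕ)} (hN : (ent L).Nodup) :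
    PS n L * PS n L = 1 := by
  induction L with
  | nil => simp
  | cons p L ih =>
      simp only [ent_cons, List.nodup_cons, List.mem_cons] at hN
      obtain ⟨h1, h2, h3⟩ := hN
      have hd : (tsw n p.1 p.2).Disjoint (PS n L) :=
        disjoint_tsw_PS (fun h => h1 (Or.inr h)) h2
      have hc := hd.commute.eq
      simp only [PS_cons]
      calc tsw n p.1 p.2 * PS n L * (tsw n p.1 p.2 * PS n L)
          = tsw n p.1 p.2 * (PS n L * tsw n p.1 p.2) * PS n L := by group
        _ = tsw n p.1 p.2 * (tsw n p.1 p.2 * PS n L) * PS n L := by rw [← hc]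
        _ = (tsw n p.1 p.2 * tsw n p.1 p.2) * (PS n L * PS n L) := by group
        _ = 1 := by rw [tsw_sq, ih h3, one_mul]

lemma PS_cycleType {n : ℕ} {L : List (ℕ × ℕ)} (hN : (ent L).Nodup)
    (hb : ∀ v ∈ ent L, v < n) :
    (PS n L).cycleType = Multiset.replicate L.length 2 := by
  induction L with
  | nil => simp
  | cons p L ih =>
      simp only [ent_cons, List.nodup_cons, List.mem_cons] at hN
      obtain ⟨h1, h2, h3⟩ := hN
      have hd : (tsw n p.1 p.2).Disjoint (PS n L) :=
        disjoint_tsw_PS (fun h => h1 (Or.inr h)) h2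
      have hp1 : p.1 < n := hb p.1 (by simp)
      have hp2 : p.2 < n := hb p.2 (by simp)
      have hne : p.1 ≠ p.2 := fun h => h1 (Or.inl h)
      have hsw : tsw n p.1 p.2 = Equiv.swap (⟨p.1, hp1⟩ : Fin n) ⟨p.2, hp2⟩ := by
        unfold tsw; rw [dif_pos ⟨hp1, hp2⟩]
      have hct : (tsw n p.1 p.2).cycleType = {2} := by
        rw [hsw, (Equiv.Perm.isCycle_swap (by simpa using hne)).cycleType,
          Equiv.Perm.card_support_swap (by simpa using hne)]
      rw [PS_cons, Equiv.Perm.Disjoint.cycleType_mul hd, hct, ih h3 (fun v hv => hb v (by simp [hv]))]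
      simp [Multiset.replicate_succ]

lemma swap4 {α : Type*} [DecidableEq α] {a b c d : α}
    (hab : a ≠ b) (hac : a ≠ c) (had : a ≠ d) (hbc : b ≠ c) (hbd : b ≠ d) (hcd : c ≠ d) :
    Equiv.swap a b * Equiv.swap c d =
      (Equiv.swap a c * Equiv.swap b d) * (Equiv.swap a d * Equiv.swap b c) := by
  ext x
  by_cases hxa : x = a <;> by_cases hxb : x = b <;> by_cases hxc : x = c <;>
    by_cases hxd : x = d <;>
    simp_all [Equiv.swap_apply_of_ne_of_ne, Equiv.swap_apply_left, Equiv.swap_apply_right,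
      Ne.symm]

lemma tsw4 {n a b c d : ℕ} (ha : a < n) (hb : b < n) (hc : c < n) (hd : d < n)
    (hab : a ≠ b) (hac : a ≠ c) (had : a ≠ d) (hbc : b ≠ c) (hbd : b ≠ d) (hcd : c ≠ d) :
    tsw n a b * tsw n c d = (tsw n a c * tsw n b d) * (tsw n a d * tsw n b c) := by
  unfold tsw
  rw [dif_pos ⟨ha, hb⟩, dif_pos ⟨hc, hd⟩, dif_pos ⟨ha, hc⟩, dif_pos ⟨hb, hd⟩,
    dif_pos ⟨ha, hd⟩, dif_pos ⟨hb, hc⟩]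
  exact swap4 (by simpa using hab) (by simpa using hac) (by simpa using had)
    (by simpa using hbc) (by simpa using hbd) (by simpa using hcd)

lemma bind_pair {α : Type*} (f : ℕ → α) (m : ℕ) :
    ((List.range m).flatMap fun s => [f (2*s), f (2*s+1)]) = (List.range (2*m)).map f := by
  induction m with
  | zero => rfl
  | succ m ih =>
      have : 2 * (m+1) = (2*m) + 1 + 1 := by ring
      rw [List.range_succ, this, List.range_succ, List.range_succ]
      simp [ih]

/-- list of pairs `(2i, 2i+1)` for `i < l` -/
def LL (l : ℕ) : List (ℕ × ℕ) := (List.range l).map fun i => (2*i, 2*i+1)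

/-- quadruple-based list -/
def Lq (l m o1 o2 o3 o4 : ℕ) : List (ℕ × ℕ) :=
  (List.range m).flatMap fun s => [(2*l+4*s+o1, 2*l+4*s+o2), (2*l+4*s+o3, 2*l+4*s+o4)]

lemma ent_LL (l : ℕ) : ent (LL l) = List.range (2*l) := by
  induction l with
  | zero => rfl
  | succ l ih =>
      have : 2 * (l+1) = (2*l) + 1 + 1 := by ring
      rw [LL, List.range_succ, this, List.range_succ, List.range_succ]
      simp only [List.map_append, ent_append, List.map_cons, List.map_nil]
      rw [← LL, ih]
      simp

lemma mem_ent_LL {l v : ℕ} : v ∈ ent (LL l) ↔ v < 2*l := by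
  rw [ent_LL, List.mem_range]

lemma nodup_ent_LL (l : ℕ) : (ent (LL l)).Nodup := by
  rw [ent_LL]; exact List.nodup_range

@[simp] lemma Lq_zero (l o1 o2 o3 o4 : ℕ) : Lq l 0 o1 o2 o3 o4 = [] := rfl

lemma Lq_succ (l m o1 o2 o3 o4 : ℕ) :
    Lq l (m+1) o1 o2 o3 o4 = Lq l m o1 o2 o3 o4 ++
      [(2*l+4*m+o1, 2*l+4*m+o2), (2*l+4*m+o3, 2*l+4*m+o4)] := by
  rw [Lq, List.range_succ, List.flatMap_append]
  simp [Lq]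

lemma mem_ent_Lq {l m o1 o2 o3 o4 v : ℕ} (h1 : o1 < 4) (h2 : o2 < 4) (h3 : o3 < 4)
    (h4 : o4 < 4) (hv : v ∈ ent (Lq l m o1 o2 o3 o4)) : 2*l ≤ v ∧ v < 2*l + 4*m := by
  induction m with
  | zero => simp at hv
  | succ m ih =>
      rw [Lq_succ, ent_append] at hv
      rcases List.mem_append.mp hv with h | h
      · have := ih h; omega
      · simp [ent] at h; omega

lemma length_Lq (l m o1 o2 o3 o4 : ℕ) : (Lq l m o1 o2 o3 o4).length = 2*m := by
  induction m with
  | zero => rfl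
  | succ m ih => rw [Lq_succ]; simp [ih]; omega

lemma nodup_ent_Lq {l m o1 o2 o3 o4 : ℕ} (h1 : o1 < 4) (h2 : o2 < 4) (h3 : o3 < 4)
    (h4 : o4 < 4) (hd : [o1,o2,o3,o4].Nodup) : (ent (Lq l m o1 o2 o3 o4)).Nodup := by
  induction m with
  | zero => simp
  | succ m ih =>
      rw [Lq_succ, ent_append]
      refine List.Nodup.append ih ?_ ?_
      · simp [ent] at hd ⊢; omega
      · intro v hv hv2
        have := mem_ent_Lq h1 h2 h3 h4 hv
        simp [ent] at hv2; omega

lemma PS_core {n l m : ℕ} (hn : 2*l + 4*m ≤ n) :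
    PS n (Lq l m 0 1 2 3) = PS n (Lq l m 0 2 1 3) * PS n (Lq l m 0 3 1 2) := by
  induction m with
  | zero => simp
  | succ m ih =>
      have hn' : 2*l + 4*m ≤ n := by omega
      rw [Lq_succ, Lq_succ, Lq_succ, PS_append, PS_append, PS_append]
      have hA : PS n [(2*l+4*m+0, 2*l+4*m+2), (2*l+4*m+1, 2*l+4*m+3)] *
            PS n (Lq l m 0 3 1 2)
          = PS n (Lq l m 0 3 1 2) *
            PS n [(2*l+4*m+0, 2*l+4*m+2), (2*l+4*m+1, 2*l+4*m+3)] := by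
        refine (Equiv.Perm.Disjoint.commute (PS_disjoint ?_)).eq
        intro v hv hv2
        have := mem_ent_Lq (by norm_num) (by norm_num) (by norm_num) (by norm_num) hv2
        simp [ent] at hv; omega
      have hq : PS n [(2*l+4*m+0, 2*l+4*m+1), (2*l+4*m+2, 2*l+4*m+3)]
          = PS n [(2*l+4*m+0, 2*l+4*m+2), (2*l+4*m+1, 2*l+4*m+3)] *
            PS n [(2*l+4*m+0, 2*l+4*m+3), (2*l+4*m+1, 2*l+4*m+2)] := by
        simp only [PS_cons, PS_nil, mul_one]
        exact tsw4 (by omega) (by omega) (by omega) (by omega)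
          (by omega) (by omega) (by omega) (by omega) (by omega) (by omega)
      calc PS n (Lq l m 0 1 2 3) * PS n [(2*l+4*m+0, 2*l+4*m+1), (2*l+4*m+2, 2*l+4*m+3)]
          = PS n (Lq l m 0 2 1 3) * PS n (Lq l m 0 3 1 2) *
            (PS n [(2*l+4*m+0, 2*l+4*m+2), (2*l+4*m+1, 2*l+4*m+3)] *
             PS n [(2*l+4*m+0, 2*l+4*m+3), (2*l+4*m+1, 2*l+4*m+2)]) := by
            rw [ih hn', hq]
        _ = PS n (Lq l m 0 2 1 3) *
            (PS n [(2*l+4*m+0, 2*l+4*m+2), (2*l+4*m+1, 2*l+4*m+3)] *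
             PS n (Lq l m 0 3 1 2)) *
            PS n [(2*l+4*m+0, 2*l+4*m+3), (2*l+4*m+1, 2*l+4*m+2)] := by
            rw [hA]; group
        _ = _ := by group

lemma iotaFin_eq_PS {n k : ℕ} (hn : 2*k ≤ n) : iotaFin n k = PS n (LL k) := by
  unfold iotaFin PS LL
  rw [List.map_map]
  apply congrArg List.prod
  apply List.map_congr_left
  intro i hi
  simp only [List.mem_range] at hi
  have h1 : 2*i+1 < n := by omega
  rw [dif_pos h1]
  show _ = tsw n (2*i) (2*i+1)
  unfold tsw
  rw [dif_pos ⟨by omega, h1⟩]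

lemma LL_split (l m : ℕ) : LL (l + 2*m) = LL l ++ Lq l m 0 1 2 3 := by
  unfold LL
  rw [List.range_add, List.map_append, List.map_map]
  congr 1
  rw [show ((fun i => (2*i, 2*i+1)) ∘ fun x => l + x)
      = (fun j => (2*(l+j), 2*(l+j)+1)) from rfl,
    ← bind_pair (fun j => (2*(l+j), 2*(l+j)+1)) m]
  unfold Lq
  congr 1
  funext s
  simp only [List.cons.injEq, Prod.mk.injEq, and_true]
  omega


/-- Lemma 8.1: if `0 < l ≤ k`, `l` and `k` have the same parity, and `n ≥ 2k`, then
`ι_l` is a product of three permutations of `Fin n` each conjugate to `ι_k`. -/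
theorem iota_prod_three_conjugates (l k n : ℕ) (hl : 0 < l) (hlk : l ≤ k)
    (hpar : l % 2 = k % 2) (hn : 2 * k ≤ n) :
    ∃ σ₁ σ₂ σ₃ : Equiv.Perm (Fin n),
      IsConj (iotaFin n k) σ₁ ∧ IsConj (iotaFin n k) σ₂ ∧ IsConj (iotaFin n k) σ₃ ∧
      iotaFin n l = σ₁ * σ₂ * σ₃ := by
  obtain ⟨m, hm⟩ : ∃ m, k = l + 2*m := ⟨(k-l)/2, by omega⟩
  have h2l : 2*l ≤ n := by omega
  have hql : 2*l + 4*m ≤ n := by omega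
  -- bounds and nodup facts
  have hnodA : (ent (Lq l m 0 2 1 3 ++ LL l)).Nodup := by
    rw [ent_append]
    refine List.Nodup.append
      (nodup_ent_Lq (by norm_num) (by norm_num) (by norm_num) (by norm_num) (by decide))
      (nodup_ent_LL l) ?_
    intro v hv hv2
    have := mem_ent_Lq (by norm_num) (by norm_num) (by norm_num) (by norm_num) hv
    have := mem_ent_LL.mp hv2
    omega
  have hnodB : (ent (Lq l m 0 3 1 2 ++ LL l)).Nodup := by
    rw [ent_append]
    refine List.Nodup.append
      (nodup_ent_Lq (by norm_num) (by norm_num) (by norm_num) (by norm_num) (by decide))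
      (nodup_ent_LL l) ?_
    intro v hv hv2
    have := mem_ent_Lq (by norm_num) (by norm_num) (by norm_num) (by norm_num) hv
    have := mem_ent_LL.mp hv2
    omega
  have hbA : ∀ v ∈ ent (Lq l m 0 2 1 3 ++ LL l), v < n := by
    intro v hv
    rw [ent_append, List.mem_append] at hv
    rcases hv with hv | hv
    · have := mem_ent_Lq (by norm_num) (by norm_num) (by norm_num) (by norm_num) hv; omega
    · have := mem_ent_LL.mp hv; omega
  have hbB : ∀ v ∈ ent (Lq l m 0 3 1 2 ++ LL l), v < n := by
    intro v hv
    rw [ent_append, List.mem_append] at hv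
    rcases hv with hv | hv
    · have := mem_ent_Lq (by norm_num) (by norm_num) (by norm_num) (by norm_num) hv; omega
    · have := mem_ent_LL.mp hv; omega
  have hbK : ∀ v ∈ ent (LL k), v < n := by
    intro v hv; have := mem_ent_LL.mp hv; omega
  have hctK : (iotaFin n k).cycleType = Multiset.replicate k 2 := by
    rw [iotaFin_eq_PS hn, PS_cycleType (nodup_ent_LL k) hbK]
    congr 1
    simp [LL]
  refine ⟨iotaFin n k, PS n (Lq l m 0 2 1 3 ++ LL l), PS n (Lq l m 0 3 1 2 ++ LL l),
    IsConj.refl _, ?_, ?_, ?_⟩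
  · rw [Equiv.Perm.isConj_iff_cycleType_eq, hctK, PS_cycleType hnodA hbA]
    congr 1
    simp [LL, length_Lq]
    omega
  · rw [Equiv.Perm.isConj_iff_cycleType_eq, hctK, PS_cycleType hnodB hbB]
    congr 1
    simp [LL, length_Lq]
    omega
  · have hcomm : PS n (LL l) * PS n (Lq l m 0 3 1 2)
        = PS n (Lq l m 0 3 1 2) * PS n (LL l) := by
      refine (Equiv.Perm.Disjoint.commute (PS_disjoint ?_)).eq
      intro v hv hv2
      have := mem_ent_Lq (by norm_num) (by norm_num) (by norm_num) (by norm_num) hv2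
      have := mem_ent_LL.mp hv
      omega
    have hP2 : PS n (LL l) * PS n (LL l) = 1 := PS_sq (nodup_ent_LL l)
    have hC2 : PS n (Lq l m 0 1 2 3) * PS n (Lq l m 0 1 2 3) = 1 :=
      PS_sq (nodup_ent_Lq (by norm_num) (by norm_num) (by norm_num) (by norm_num) (by decide))
    have hcore := PS_core (n := n) (l := l) (m := m) hql
    rw [iotaFin_eq_PS hn, iotaFin_eq_PS h2l, hm, LL_split, PS_append, PS_append, PS_append]
    calc PS n (LL l)
        = PS n (LL l) * (PS n (Lq l m 0 1 2 3) * PS n (Lq l m 0 1 2 3)) := by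
          rw [hC2, mul_one]
      _ = PS n (LL l) * PS n (Lq l m 0 1 2 3) *
          (PS n (Lq l m 0 2 1 3) * PS n (Lq l m 0 3 1 2)) *
          (PS n (LL l) * PS n (LL l)) := by rw [← hcore, hP2, mul_one]; group
      _ = PS n (LL l) * PS n (Lq l m 0 1 2 3) * PS n (Lq l m 0 2 1 3) *
          (PS n (LL l) * PS n (Lq l m 0 3 1 2)) * PS n (LL l) := by rw [hcomm]; group
      _ = PS n (LL l) * PS n (Lq l m 0 1 2 3) *
          (PS n (Lq l m 0 2 1 3) * PS n (LL l)) *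
          (PS n (Lq l m 0 3 1 2) * PS n (LL l)) := by group
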